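/- Let P be a property of separable C*-algebras that is preserved under sequential inductive limits with injective connecting maps and is preserved by quotients of separable C*-algebras, meaning: whenever q' : E' → D' is a surjective *-homomorphism between separable C*-algebras and E' satisfies P, then D' satisfies P. Then the property 'separably satisfies P' is preserved by quotients among all C*-algebras: if a C*-algebra A separably satisfies P and q : A → C is a surjective *-homomorphism onto a C*-algebra C, then C separably satisfies P. -/

import Mathlib

open TopologicalSpace

universe u

/-- A property of C*-algebras: a predicate on (non-unital) C*-algebras. -/
abbrev CStarProp : Type (u + 1) := ∀ (B : Type u) [NonUnitalCStarAlgebra B], Prop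

/-- Invariance of a property of C*-algebras under *-isomorphism. -/
def CStarProp.IsoInvariant (P : CStarProp.{u}) : Prop :=
  ∀ (B C : Type u) [NonUnitalCStarAlgebra B] [NonUnitalCStarAlgebra C],
    (B ≃⋆ₐ[ℂ] C) → P B → P C

/-- `P` holds for a closed star-subalgebra of a C*-algebra, regarded as a
C*-algebra in its own right. -/
def SatSub {A : Type u} [NonUnitalCStarAlgebra A] (P : CStarProp.{u})
    (S : NonUnitalStarSubalgebra ℂ A) (hS : IsClosed (S : Set A)) : Prop :=
  letI : IsClosed (S : Set A) := hS
  P S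

/-- `P` is preserved under sequential inductive limits with injective connecting maps:
for every C*-algebra `C` and every increasing sequence of separable closed
star-subalgebras of `C` each satisfying `P`, the closure of their union satisfies `P`. -/
def LimitClosed (P : CStarProp.{u}) : Prop :=
  ∀ (C : Type u) [NonUnitalCStarAlgebra C] (S : ℕ → NonUnitalStarSubalgebra ℂ C),
    Monotone S →
    ∀ (hcl : ∀ n, IsClosed (S n : Set C)),
    (∀ n, SeparableSpace (S n)) →
    (∀ n, SatSub P (S n) (hcl n)) →
    ∀ (T : NonUnitalStarSubalgebra ℂ C) (hT : (T : Set C) = closure (⋃ n, (S n : Set C))),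
      SatSub P T (by rw [hT]; exact isClosed_closure)

/-- `A` separably satisfies `P`: every separable closed star-subalgebra of `A` is
contained in a separable closed star-subalgebra of `A` satisfying `P`. -/
def SepSat (P : CStarProp.{u}) (A : Type u) [NonUnitalCStarAlgebra A] : Prop :=
  ∀ S₀ : NonUnitalStarSubalgebra ℂ A, IsClosed (S₀ : Set A) → SeparableSpace S₀ →
    ∃ (S : NonUnitalStarSubalgebra ℂ A) (hS : IsClosed (S : Set A)),
      SeparableSpace S ∧ S₀ ≤ S ∧ SatSub P S hS

private lemma countable_subsemigroupClosure {M : Type*} [Semigroup M] {s : Set M}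
    (hs : s.Countable) : ((Subsemigroup.closure s : Subsemigroup M) : Set M).Countable := by
  have := hs.to_subtype
  let g : M → s → M := fun a b => a * (b : M)
  have hfold : ∀ (l : List s) (x y : M), l.foldl g (x * y) = x * l.foldl g y := by
    intro l
    induction l with
    | nil => intro x y; rfl
    | cons c t ih => intro x y; simp only [List.foldl_cons, g, mul_assoc, ih]
  let f : s × List s → M := fun p => p.2.foldl g (p.1 : M)
  have hT : (Subsemigroup.closure s : Subsemigroup M) ≤
      { carrier := Set.range f
        mul_mem' := by
          rintro _ _ ⟨⟨x, l⟩, rfl⟩ ⟨⟨y, m⟩, rfl⟩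
          refine ⟨⟨x, l ++ y :: m⟩, ?_⟩
          simp only [f, List.foldl_append, List.foldl_cons]
          rw [hfold] } := by
    rw [Subsemigroup.closure_le]
    exact fun x hx => ⟨⟨⟨x, hx⟩, []⟩, rfl⟩
  exact (Set.countable_range f).mono hT

private lemma isSeparable_adjoin {A : Type*} [NonUnitalCStarAlgebra A] {s : Set A}
    (hs : s.Countable) :
    IsSeparable ((NonUnitalStarAlgebra.adjoin ℂ s : NonUnitalStarSubalgebra ℂ A) : Set A) := by
  have hstar : (star s : Set A).Countable := by
    rw [← Set.image_star]; exact hs.image _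
  have h1 : ((NonUnitalStarAlgebra.adjoin ℂ s : NonUnitalStarSubalgebra ℂ A) : Set A)
      = (Submodule.span ℂ ((Subsemigroup.closure (s ∪ star s) : Subsemigroup A) : Set A) : Set A) := by
    have h2 := NonUnitalAlgebra.adjoin_eq_span (R := ℂ) (A := A) (s ∪ star s)
    have : ((NonUnitalStarAlgebra.adjoin ℂ s : NonUnitalStarSubalgebra ℂ A) : Set A)
        = ((NonUnitalAlgebra.adjoin ℂ (s ∪ star s) : NonUnitalSubalgebra ℂ A) : Set A) := by
      rw [← NonUnitalStarAlgebra.adjoin_toNonUnitalSubalgebra]; rfl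
    rw [this, ← h2]; rfl
  rw [h1]
  exact ((countable_subsemigroupClosure (hs.union hstar)).isSeparable).span

/-- If `P` is a property of separable C*-algebras preserved under sequential
inductive limits with injective connecting maps and preserved by quotients of separable
C*-algebras, then 'separably satisfies `P`' is preserved by quotients among all C*-algebras:
if `A` separably satisfies `P` and `q : A → C` is a surjective *-homomorphism, then `C`
separably satisfies `P`. -/
theorem sepSat_of_quotient {A C : Type u} [NonUnitalCStarAlgebra A] [NonUnitalCStarAlgebra C]
    (P : CStarProp.{u})
    (hiso : P.IsoInvariant)
    (hlim : LimitClosed P)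
    (hquot : ∀ (E' D' : Type u) [NonUnitalCStarAlgebra E'] [NonUnitalCStarAlgebra D']
      (q' : E' →⋆ₙₐ[ℂ] D'), Function.Surjective q' →
      SeparableSpace E' → SeparableSpace D' → P E' → P D')
    (hA : SepSat P A)
    (q : A →⋆ₙₐ[ℂ] C) (hq : Function.Surjective q) :
    SepSat P C := by
  intro T₀ hT₀c hT₀s
  -- bounded linear lifts via the open mapping theorem
  let qlin : A →ₗ[ℂ] C := { toFun := q, map_add' := map_add q, map_smul' := map_smul q }
  let qL : A →L[ℂ] C :=
    qlin.mkContinuous 1 (fun a => by show ‖q a‖ ≤ 1 * ‖a‖; simpa using NonUnitalStarAlgHom.norm_apply_le q a)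
  have hqL : Function.Surjective qL := hq
  obtain ⟨K, hK, hKs⟩ := qL.exists_preimage_norm_le hqL
  choose ℓ hℓq hℓn using hKs
  have hℓq' : ∀ c, q (ℓ c) = c := hℓq
  -- enlarging a countable set to a separable closed subalgebra satisfying P
  have enlarge : ∀ s : Set A, s.Countable →
      ∃ (S : NonUnitalStarSubalgebra ℂ A) (hS : IsClosed (S : Set A)),
        SeparableSpace S ∧ s ⊆ (S : Set A) ∧ SatSub P S hS := by
    intro s hs
    set S₀ := (NonUnitalStarAlgebra.adjoin ℂ s).topologicalClosure with hS₀
    have hS₀c : IsClosed (S₀ : Set A) :=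
      NonUnitalStarSubalgebra.isClosed_topologicalClosure _
    have hS₀sep : SeparableSpace S₀ := by
      have : IsSeparable (S₀ : Set A) := (isSeparable_adjoin hs).closure
      exact this.separableSpace
    obtain ⟨S, hS, hsep, hle, hP⟩ := hA S₀ hS₀c hS₀sep
    exact ⟨S, hS, hsep,
      (NonUnitalStarAlgebra.subset_adjoin ℂ s).trans
        ((NonUnitalStarSubalgebra.le_topologicalClosure _).trans hle), hP⟩
  -- the state space for the back-and-forth construction
  let StP : NonUnitalStarSubalgebra ℂ A × Set A → Prop := fun p =>
    ∃ h : IsClosed (p.1 : Set A),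
      SeparableSpace p.1 ∧ SatSub P p.1 h ∧ p.2.Countable ∧ (p.1 : Set A) ⊆ closure p.2
  -- a countable dense set for the image of T₀, lifted
  obtain ⟨X, hXc, hXd⟩ : IsSeparable (T₀ : Set C) := IsSeparable.of_subtype _
  -- initial state
  obtain ⟨S0, hS0c, hS0sep, hS0sub, hS0P⟩ := enlarge (ℓ '' X) (hXc.image ℓ)
  obtain ⟨E0, hE0c, hE0d⟩ : IsSeparable (S0 : Set A) := IsSeparable.of_subtype _
  have hx₀ : StP (S0, E0) := ⟨hS0c, hS0sep, hS0P, hE0c, hE0d⟩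
  -- the step of the construction
  have stepEx : ∀ x : NonUnitalStarSubalgebra ℂ A × Set A, StP x →
      ∃ y : NonUnitalStarSubalgebra ℂ A × Set A, StP y ∧ x.1 ≤ y.1 ∧ x.2 ⊆ y.2 ∧
        (∀ a ∈ x.2, ℓ (q a) ∈ y.1) ∧
        (∀ a ∈ x.2, ∀ b ∈ x.2, ℓ (q (a - b)) ∈ y.1) := by
    rintro ⟨S', D'⟩ ⟨hcl, hsep, hP, hDc, hDd⟩
    have hg : (D' ∪ (ℓ '' (q '' D') ∪ ℓ '' (q '' (Set.image2 (· - ·) D' D')))).Countable :=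
      hDc.union (((hDc.image _).image _).union
        (((hDc.image2 hDc _).image _).image _))
    obtain ⟨S, hS, hsep', hsub, hP'⟩ := enlarge _ hg
    obtain ⟨E, hEc, hEd⟩ : IsSeparable (S : Set A) := IsSeparable.of_subtype _
    have hle : S' ≤ S := by
      have h1 : closure D' ⊆ (S : Set A) :=
        closure_minimal (Set.subset_union_left.trans hsub) hS
      exact fun a ha => h1 (hDd ha)
    refine ⟨(S, D' ∪ E), ⟨hS, hsep', hP', hDc.union hEc, ?_⟩, hle, Set.subset_union_left,
      ?_, ?_⟩
    · exact hEd.trans (closure_mono Set.subset_union_right)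
    · intro a ha
      exact hsub (Set.mem_union_right _ (Set.mem_union_left _ ⟨q a, ⟨a, ha, rfl⟩, rfl⟩))
    · intro a ha b hb
      exact hsub (Set.mem_union_right _ (Set.mem_union_right _
        ⟨q (a - b), ⟨a - b, Set.mem_image2_of_mem ha hb, rfl⟩, rfl⟩))
  -- iterate the step
  let St := {x : NonUnitalStarSubalgebra ℂ A × Set A // StP x}
  let stp : St → St := fun x => ⟨(stepEx x.1 x.2).choose, (stepEx x.1 x.2).choose_spec.1⟩
  let F : ℕ → St := fun n => stp^[n] ⟨(S0, E0), hx₀⟩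
  have hFsucc : ∀ n, F (n + 1) = stp (F n) := fun n => Function.iterate_succ_apply' stp n _
  set Sn : ℕ → NonUnitalStarSubalgebra ℂ A := fun n => (F n).1.1 with hSn
  set Dn : ℕ → Set A := fun n => (F n).1.2 with hDn
  have props : ∀ n, StP ((F n).1) := fun n => (F n).2
  have hSncl : ∀ n, IsClosed (Sn n : Set A) := fun n => (props n).choose
  have hSnsep : ∀ n, SeparableSpace (Sn n) := fun n => (props n).choose_spec.1
  have hSnP : ∀ n, SatSub P (Sn n) (hSncl n) := fun n => (props n).choose_spec.2.1
  have hDnc : ∀ n, (Dn n).Countable := fun n => (props n).choose_spec.2.2.1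
  have hDnd : ∀ n, (Sn n : Set A) ⊆ closure (Dn n) := fun n => (props n).choose_spec.2.2.2
  have hstep : ∀ n, Sn n ≤ Sn (n + 1) ∧ Dn n ⊆ Dn (n + 1) ∧
      (∀ a ∈ Dn n, ℓ (q a) ∈ Sn (n + 1)) ∧
      (∀ a ∈ Dn n, ∀ b ∈ Dn n, ℓ (q (a - b)) ∈ Sn (n + 1)) := by
    intro n
    have h := (stepEx (F n).1 (F n).2).choose_spec
    have h1 : Sn (n + 1) = (stepEx (F n).1 (F n).2).choose.1 := by
      show ((F (n + 1)).1).1 = _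
      rw [hFsucc n]
    have h2 : Dn (n + 1) = (stepEx (F n).1 (F n).2).choose.2 := by
      show ((F (n + 1)).1).2 = _
      rw [hFsucc n]
    rw [h1, h2]
    exact ⟨h.2.1, h.2.2.1, h.2.2.2.1, h.2.2.2.2⟩
  have monoS : Monotone Sn := monotone_nat_of_le_succ fun n => (hstep n).1
  have monoD : Monotone Dn := monotone_nat_of_le_succ fun n => (hstep n).2.1
  -- the limit algebra
  set Sfull : NonUnitalStarSubalgebra ℂ A := (⨆ n, Sn n).topologicalClosure with hSfull
  have hcoe : (Sfull : Set A) = closure (⋃ n, (Sn n : Set A)) := by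
    show closure ((⨆ n, Sn n : NonUnitalStarSubalgebra ℂ A) : Set A) = _
    rw [NonUnitalStarSubalgebra.coe_iSup_of_directed monoS.directed_le]
  have hSfullc : IsClosed (Sfull : Set A) :=
    NonUnitalStarSubalgebra.isClosed_topologicalClosure _
  have hSnle : ∀ n, Sn n ≤ Sfull := fun n =>
    (le_iSup Sn n).trans (NonUnitalStarSubalgebra.le_topologicalClosure _)
  set Dall : Set A := ⋃ n, Dn n with hDall
  have hDallc : Dall.Countable := Set.countable_iUnion hDnc
  have hdense : (Sfull : Set A) ⊆ closure Dall := by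
    rw [hcoe]
    refine closure_minimal (Set.iUnion_subset fun n => ?_) isClosed_closure
    exact (hDnd n).trans (closure_mono (Set.subset_iUnion Dn n))
  have hSfullsep : SeparableSpace Sfull := by
    have : IsSeparable (Sfull : Set A) := ⟨Dall, hDallc, hdense⟩
    exact this.separableSpace
  have hPSfull : SatSub P Sfull hSfullc :=
    hlim A Sn monoS hSncl hSnsep hSnP Sfull hcoe
  -- lift properties
  have hliftD : ∀ a ∈ Dall, ℓ (q a) ∈ Sfull := by
    rintro a ha
    obtain ⟨n, hn⟩ := Set.mem_iUnion.mp ha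
    exact hSnle (n + 1) ((hstep n).2.2.1 a hn)
  have hlift2 : ∀ a ∈ Dall, ∀ b ∈ Dall, ℓ (q (a - b)) ∈ Sfull := by
    rintro a ha b hb
    obtain ⟨m, hm⟩ := Set.mem_iUnion.mp ha
    obtain ⟨k, hk⟩ := Set.mem_iUnion.mp hb
    exact hSnle (max m k + 1) ((hstep (max m k)).2.2.2 a
      (monoD (le_max_left m k) hm) b (monoD (le_max_right m k) hk))
  -- the image of `Sfull` is closed
  have himg : closure (q '' (Sfull : Set A)) ⊆ q '' (Sfull : Set A) := by
    intro c hc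
    have hc' : c ∈ closure (q '' Dall) := by
      refine closure_minimal ?_ isClosed_closure hc
      intro y hy
      obtain ⟨a, ha, rfl⟩ := hy
      have : a ∈ closure Dall := hdense ha
      have hcont : Continuous q := by
        have := qL.continuous; exact this
      exact map_mem_closure hcont this (fun b hb => Set.mem_image_of_mem q hb)
    have hd : ∀ n : ℕ, ∃ x, x ∈ Dall ∧ ‖c - q x‖ < (2 : ℝ)⁻¹ ^ n := by
      intro n
      obtain ⟨y, hy, hdist⟩ := Metric.mem_closure_iff.mp hc' ((2 : ℝ)⁻¹ ^ n) (by positivity)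
      obtain ⟨x, hx, rfl⟩ := hy
      exact ⟨x, hx, by rwa [dist_eq_norm] at hdist⟩
    choose d hdm hdn using hd
    set u : ℕ → A := fun n => Nat.rec (ℓ (q (d 0))) (fun k _ => ℓ (q (d (k + 1) - d k))) n
      with hu_def
    have hu0 : u 0 = ℓ (q (d 0)) := rfl
    have hus : ∀ k, u (k + 1) = ℓ (q (d (k + 1) - d k)) := fun k => rfl
    have humem : ∀ n, u n ∈ Sfull := by
      intro n
      cases n with
      | zero => exact hliftD (d 0) (hdm 0)
      | succ k => exact hlift2 (d (k + 1)) (hdm (k + 1)) (d k) (hdm k)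
    have hqu0 : q (u 0) = q (d 0) := hℓq' _
    have hqus : ∀ k, q (u (k + 1)) = q (d (k + 1)) - q (d k) := by
      intro k
      rw [hus, hℓq', map_sub]
    have hnorm : ∀ k, ‖u (k + 1)‖ ≤ K * 2 * (2 : ℝ)⁻¹ ^ k := by
      intro k
      have h1 : ‖u (k + 1)‖ ≤ K * ‖q (d (k + 1) - d k)‖ := by rw [hus]; exact hℓn _
      have h2 : ‖q (d (k + 1) - d k)‖ ≤ 2 * (2 : ℝ)⁻¹ ^ k := by
        rw [map_sub]
        calc ‖q (d (k + 1)) - q (d k)‖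
            ≤ ‖q (d (k + 1)) - c‖ + ‖c - q (d k)‖ := by
              simpa using norm_sub_le_norm_sub_add_norm_sub (q (d (k + 1))) c (q (d k))
          _ ≤ (2 : ℝ)⁻¹ ^ (k + 1) + (2 : ℝ)⁻¹ ^ k := by
              have ha : ‖q (d (k + 1)) - c‖ < (2 : ℝ)⁻¹ ^ (k + 1) := by
                rw [norm_sub_rev]; exact hdn (k + 1)
              exact add_le_add ha.le (hdn k).le
          _ ≤ 2 * (2 : ℝ)⁻¹ ^ k := by
              rw [pow_succ]
              nlinarith [pow_nonneg (by norm_num : (0:ℝ) ≤ 2⁻¹) k]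
      calc ‖u (k + 1)‖ ≤ K * ‖q (d (k + 1) - d k)‖ := h1
        _ ≤ K * (2 * (2 : ℝ)⁻¹ ^ k) := by
            exact mul_le_mul_of_nonneg_left h2 (le_of_lt hK)
        _ = K * 2 * (2 : ℝ)⁻¹ ^ k := by ring
    have hsummable : Summable u := by
      rw [← summable_nat_add_iff 1]
      refine Summable.of_norm_bounded
        ((summable_geometric_of_lt_one (r := (2 : ℝ)⁻¹) (by norm_num) (by norm_num)).mul_left (K * 2))
        (fun k => hnorm k)
    set s := ∑' n, u n with hs_def
    have hhs : HasSum u s := hsummable.hasSum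
    have hsmem : s ∈ Sfull := by
      refine hSfullc.mem_of_tendsto hhs.tendsto_sum_nat
        (Filter.Eventually.of_forall fun n => ?_)
      exact sum_mem fun i _ => humem i
    have hpartial : ∀ n, ∑ i ∈ Finset.range (n + 1), q (u i) = q (d n) := by
      intro n
      induction n with
      | zero => simpa using hqu0
      | succ k ih =>
        rw [Finset.sum_range_succ, ih, hqus k]
        abel
    have htend1 : Filter.Tendsto (fun n => q (d n)) Filter.atTop (nhds c) := by
      rw [tendsto_iff_norm_sub_tendsto_zero]
      refine squeeze_zero (fun n => norm_nonneg _) (fun n => ?_)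
        (tendsto_pow_atTop_nhds_zero_of_lt_one (r := (2 : ℝ)⁻¹) (by norm_num) (by norm_num))
      rw [norm_sub_rev]
      exact le_of_lt (hdn n)
    have htend2 : Filter.Tendsto (fun n => ∑ i ∈ Finset.range n, q (u i))
        Filter.atTop (nhds c) := by
      rw [← Filter.tendsto_add_atTop_iff_nat 1]
      simpa only [hpartial] using htend1
    have hqs : q s = c := by
      have h3 : Filter.Tendsto (fun n => ∑ i ∈ Finset.range n, q (u i))
          Filter.atTop (nhds (q s)) := by
        have := (qL.hasSum hhs).tendsto_sum_nat
        exact this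
      exact tendsto_nhds_unique h3 htend2
    exact ⟨s, hsmem, hqs⟩
  have hclosedimg : IsClosed (q '' (Sfull : Set A)) := isClosed_of_closure_subset himg
  -- the image subalgebra
  set T : NonUnitalStarSubalgebra ℂ C := Sfull.map (q : A →⋆ₙₐ[ℂ] C) with hT_def
  have hTset : (T : Set C) = q '' (Sfull : Set A) :=
    NonUnitalStarSubalgebra.coe_map Sfull (q : A →⋆ₙₐ[ℂ] C)
  have hTc : IsClosed (T : Set C) := by rw [hTset]; exact hclosedimg
  have hTsep : SeparableSpace T := by
    have hcont : Continuous q := qL.continuous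
    have : IsSeparable (T : Set C) := by
      rw [hTset]
      exact (IsSeparable.mono ⟨Dall, hDallc, hdense⟩ subset_rfl).image hcont
    exact this.separableSpace
  have hT₀le : T₀ ≤ T := by
    intro x hx
    have h1 : (T₀ : Set C) ⊆ closure X := hXd
    have h2 : X ⊆ (T : Set C) := by
      intro y hy
      rw [hTset]
      refine ⟨ℓ y, ?_, hℓq' y⟩
      exact hSnle 0 (hS0sub (Set.mem_image_of_mem ℓ hy))
    exact closure_minimal h2 hTc (h1 hx)
  refine ⟨T, hTc, hTsep, hT₀le, ?_⟩
  -- transfer P along the quotient map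
  haveI : IsClosed ((Sfull : NonUnitalStarSubalgebra ℂ A) : Set A) := hSfullc
  haveI : IsClosed ((T : NonUnitalStarSubalgebra ℂ C) : Set C) := hTc
  show P T
  have hqmem : ∀ x : Sfull, q ((NonUnitalStarSubalgebraClass.subtype Sfull) x) ∈ T := by
    intro x
    exact NonUnitalStarSubalgebra.mem_map.mpr ⟨(x : A), x.2, rfl⟩
  let q' : Sfull →⋆ₙₐ[ℂ] T :=
    NonUnitalStarAlgHom.codRestrict
      ((q : A →⋆ₙₐ[ℂ] C).comp (NonUnitalStarSubalgebraClass.subtype Sfull)) T hqmem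
  have hq'surj : Function.Surjective q' := by
    rintro ⟨y, hy⟩
    obtain ⟨x, hx, rfl⟩ := NonUnitalStarSubalgebra.mem_map.mp hy
    exact ⟨⟨x, hx⟩, rfl⟩
  exact hquot Sfull T q' hq'surj hSfullsep hTsep hPSfull
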